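/- For all real q ≥ 2 and all integers e₂ ≥ 2, the products A = ∏_{i=1}^{e₂} (1 - (-q)^{-i}) and B(e₁) = ∏_{i=1}^{e₂} (1 - (-q)^{-e₁-i}) for any e₁ ≥ e₂ satisfy A ≤ 1 + q^{-1} and B(e₁) ≥ (1 - q^{-4})(1 - q^{-6}); hence their ratio is at most (1 + q^{-1})/((1 - q^{-4})(1 - q^{-6})). -/

import Mathlib

open Finset

private noncomputable def gP (q : ℝ) (m n : ℕ) : ℝ :=
  ∏ j ∈ Finset.range n, (1 - ((-q) ^ (m + j))⁻¹)

private lemma hq1 {q : ℝ} (hq : 2 ≤ q) : 1 < q := by linarith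

private lemma pow_ge_two {q : ℝ} (hq : 2 ≤ q) {m : ℕ} (hm : 1 ≤ m) : 2 ≤ q ^ m := by
  calc (2:ℝ) ≤ q := hq
  _ ≤ q ^ m := le_self_pow₀ (by linarith) (by omega)

private lemma inv_small {q : ℝ} (hq : 2 ≤ q) {m : ℕ} (hm : 1 ≤ m) :
    0 < (q ^ m)⁻¹ ∧ (q ^ m)⁻¹ ≤ 1/2 := by
  have h2 := pow_ge_two hq hm
  constructor
  · positivity
  · rw [inv_le_comm₀ (by linarith) (by norm_num)]
    linarith

private lemma neg_inv_le {q : ℝ} (hq : 2 ≤ q) {m : ℕ} (hm : 1 ≤ m) :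
    ((-q) ^ m)⁻¹ ≤ (q ^ m)⁻¹ := by
  have h := le_abs_self (((-q) ^ m)⁻¹)
  have : |((-q) ^ m)⁻¹| = (q ^ m)⁻¹ := by
    rw [abs_inv, abs_pow, abs_neg, abs_of_pos (by linarith)]
  linarith

private lemma factor_pos {q : ℝ} (hq : 2 ≤ q) {m : ℕ} (hm : 1 ≤ m) :
    0 < 1 - ((-q) ^ m)⁻¹ := by
  have h1 := neg_inv_le hq hm
  have h2 := (inv_small hq hm).2
  linarith

private lemma gP_pos {q : ℝ} (hq : 2 ≤ q) {m : ℕ} (hm : 1 ≤ m) (n : ℕ) :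
    0 < gP q m n := by
  apply Finset.prod_pos
  intro j _
  exact factor_pos hq (by omega)

private lemma gP_succ (q : ℝ) (m n : ℕ) :
    gP q m (n + 1) = (1 - ((-q) ^ m)⁻¹) * gP q (m + 1) n := by
  rw [gP, gP, Finset.prod_range_succ', mul_comm]
  congr 1
  apply Finset.prod_congr rfl
  intro j _
  rw [show m + (j + 1) = (m + 1) + j from by omega]

private lemma even_factor {q : ℝ} (hq : 2 ≤ q) {m : ℕ} (hm : Even m) :
    1 - ((-q) ^ m)⁻¹ = 1 - (q ^ m)⁻¹ := by
  rw [hm.neg_pow]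

private lemma odd_factor {q : ℝ} (hq : 2 ≤ q) {m : ℕ} (hm : Odd m) :
    1 - ((-q) ^ m)⁻¹ = 1 + (q ^ m)⁻¹ := by
  rw [hm.neg_pow, inv_neg]
  ring

private lemma ab_facts {q : ℝ} (hq : 2 ≤ q) {m : ℕ} (hm : 1 ≤ m) :
    0 < (q ^ m)⁻¹ ∧ (q ^ m)⁻¹ ≤ 1/2 ∧ 0 < (q ^ (m+1))⁻¹ ∧
      q * (q ^ (m+1))⁻¹ = (q ^ m)⁻¹ := by
  have h1 := inv_small hq hm
  have h2 := inv_small hq (show 1 ≤ m + 1 by omega)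
  refine ⟨h1.1, h1.2, h2.1, ?_⟩
  rw [pow_succ]
  field_simp

/-- If `m` is even (and positive), the product starting at exponent `m` is at most 1. -/
private lemma gP_le_one {q : ℝ} (hq : 2 ≤ q) :
    ∀ n m : ℕ, 1 ≤ m → Even m → gP q m n ≤ 1 := by
  intro n
  induction n using Nat.strong_induction_on with
  | _ n ih =>
    match n with
    | 0 => intro m _ _; simp [gP]
    | 1 =>
      intro m hm he
      rw [gP_succ, even_factor hq he]
      have := inv_small hq hm
      simp only [gP, Finset.range_zero, Finset.prod_empty, mul_one]
      linarith
    | n + 2 =>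
      intro m hm he
      rw [gP_succ, gP_succ, even_factor hq he,
        odd_factor hq (Even.add_one he)]
      have hg1 : gP q (m + 1 + 1) n ≤ 1 := ih n (by omega) (m + 2) (by omega) (by
        rcases he with ⟨k, hk⟩; exact ⟨k + 1, by omega⟩)
      have hg0 : 0 < gP q (m + 1 + 1) n := gP_pos hq (by omega) n
      obtain ⟨ha0, ha, hb0, hab⟩ := ab_facts hq hm
      have hpair : (1 - (q ^ m)⁻¹) * (1 + (q ^ (m+1))⁻¹) ≤ 1 := by nlinarith
      have hfac0 : 0 ≤ (1 - (q ^ m)⁻¹) * (1 + (q ^ (m+1))⁻¹) := by nlinarith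
      calc (1 - (q ^ m)⁻¹) * ((1 + (q ^ (m+1))⁻¹) * gP q (m + 1 + 1) n)
          = ((1 - (q ^ m)⁻¹) * (1 + (q ^ (m+1))⁻¹)) * gP q (m + 1 + 1) n := by ring
        _ ≤ 1 * 1 := by
            apply mul_le_one₀ hpair (le_of_lt hg0) hg1 |>.trans
            norm_num
        _ = 1 := by norm_num

/-- If `m` is odd (and positive), the product starting at exponent `m` is at least 1. -/
private lemma one_le_gP {q : ℝ} (hq : 2 ≤ q) :
    ∀ n m : ℕ, 1 ≤ m → Odd m → 1 ≤ gP q m n := by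
  intro n
  induction n using Nat.strong_induction_on with
  | _ n ih =>
    match n with
    | 0 => intro m _ _; simp [gP]
    | 1 =>
      intro m hm ho
      rw [gP_succ, odd_factor hq ho]
      have := inv_small hq hm
      simp only [gP, Finset.range_zero, Finset.prod_empty, mul_one]
      linarith
    | n + 2 =>
      intro m hm ho
      rw [gP_succ, gP_succ, odd_factor hq ho,
        even_factor hq (Odd.add_one ho)]
      have hg1 : 1 ≤ gP q (m + 1 + 1) n := ih n (by omega) (m + 2) (by omega) (by
        rcases ho with ⟨k, hk⟩; exact ⟨k + 1, by omega⟩)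
      obtain ⟨ha0, ha, hb0, hab⟩ := ab_facts hq hm
      have hpair : 1 ≤ (1 + (q ^ m)⁻¹) * (1 - (q ^ (m+1))⁻¹) := by nlinarith
      calc (1:ℝ) = 1 * 1 := by norm_num
        _ ≤ ((1 + (q ^ m)⁻¹) * (1 - (q ^ (m+1))⁻¹)) * gP q (m + 1 + 1) n := by
            apply mul_le_mul hpair hg1 (by norm_num) (by linarith)
        _ = (1 + (q ^ m)⁻¹) * ((1 - (q ^ (m+1))⁻¹) * gP q (m + 1 + 1) n) := by ring

/-- For real `q ≥ 2` and integers `e₁ ≥ e₂ ≥ 2`, the products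
`A = ∏_{i=1}^{e₂} (1 − (−q)^{-i})` and `B = ∏_{i=1}^{e₂} (1 − (−q)^{-e₁-i})` satisfy
`A ≤ 1 + q⁻¹` and `B ≥ (1 − q⁻⁴)(1 − q⁻⁶)`; hence
`A/B ≤ (1 + q⁻¹)/((1 − q⁻⁴)(1 − q⁻⁶))`. -/
theorem stmt17 (q : ℝ) (hq : 2 ≤ q) (e₁ e₂ : ℕ) (h₂ : 2 ≤ e₂) (h₂₁ : e₂ ≤ e₁) :
    (∏ i ∈ Finset.Icc 1 e₂, (1 - ((-q) ^ i)⁻¹) ≤ 1 + q⁻¹) ∧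
    ((1 - (q ^ 4)⁻¹) * (1 - (q ^ 6)⁻¹) ≤ ∏ i ∈ Finset.Icc 1 e₂, (1 - ((-q) ^ (e₁ + i))⁻¹)) ∧
    (∏ i ∈ Finset.Icc 1 e₂, (1 - ((-q) ^ i)⁻¹))
        / (∏ i ∈ Finset.Icc 1 e₂, (1 - ((-q) ^ (e₁ + i))⁻¹))
      ≤ (1 + q⁻¹) / ((1 - (q ^ 4)⁻¹) * (1 - (q ^ 6)⁻¹)) := by
  have hq0 : (0:ℝ) < q := by linarith
  -- rewrite products as gP
  have hAeq : ∏ i ∈ Finset.Icc 1 e₂, (1 - ((-q) ^ i)⁻¹) = gP q 1 e₂ := by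
    rw [gP, show Finset.Icc 1 e₂ = Finset.Ico 1 (e₂ + 1) from rfl,
      Finset.prod_Ico_eq_prod_range, Nat.add_sub_cancel]
  have hBeq : ∏ i ∈ Finset.Icc 1 e₂, (1 - ((-q) ^ (e₁ + i))⁻¹) = gP q (e₁ + 1) e₂ := by
    rw [gP, show Finset.Icc 1 e₂ = Finset.Ico 1 (e₂ + 1) from rfl,
      Finset.prod_Ico_eq_prod_range, Nat.add_sub_cancel]
    apply Finset.prod_congr rfl
    intro j _
    rw [show e₁ + (1 + j) = (e₁ + 1) + j from by omega]
  obtain ⟨n, rfl⟩ : ∃ n, e₂ = n + 1 := ⟨e₂ - 1, by omega⟩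
  -- inverse bounds
  have h4 := inv_small hq (show 1 ≤ 4 by norm_num)
  have h6 := inv_small hq (show 1 ≤ 6 by norm_num)
  have hBpos : (0:ℝ) < (1 - (q ^ 4)⁻¹) * (1 - (q ^ 6)⁻¹) := by nlinarith [h4.1, h4.2, h6.1, h6.2]
  have hBle1 : (1 - (q ^ 4)⁻¹) * (1 - (q ^ 6)⁻¹) ≤ 1 := by nlinarith [h4.1, h4.2, h6.1, h6.2]
  -- part A
  have hA : ∏ i ∈ Finset.Icc 1 (n+1), (1 - ((-q) ^ i)⁻¹) ≤ 1 + q⁻¹ := by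
    rw [hAeq, gP_succ, odd_factor hq (by norm_num)]
    have hle := gP_le_one hq n 2 (by norm_num) (by norm_num)
    have hg0 : 0 < gP q (1 + 1) n := gP_pos hq (by norm_num) n
    have hq' : 0 < q⁻¹ := by positivity
    have : q ^ 1 = q := pow_one q
    rw [this]
    nlinarith
  -- part B
  have hB : (1 - (q ^ 4)⁻¹) * (1 - (q ^ 6)⁻¹) ≤
      ∏ i ∈ Finset.Icc 1 (n+1), (1 - ((-q) ^ (e₁ + i))⁻¹) := by
    rw [hBeq]
    rcases Nat.even_or_odd (e₁ + 1) with he | ho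
    · -- e₁ + 1 even, so e₁ + 1 ≥ 4
      have hm4 : 4 ≤ e₁ + 1 := by
        rcases he with ⟨k, hk⟩; omega
      rw [gP_succ, even_factor hq he]
      have hg1 : 1 ≤ gP q (e₁ + 1 + 1) n :=
        one_le_gP hq n (e₁ + 2) (by omega) (Even.add_one he)
      have hmono : (q ^ (e₁+1))⁻¹ ≤ (q ^ 4)⁻¹ := by
        apply inv_anti₀ (by positivity)
        exact pow_le_pow_right₀ (by linarith) hm4
      have hfacpos : 0 < 1 - (q ^ (e₁+1))⁻¹ := by
        have := inv_small hq (show 1 ≤ e₁ + 1 by omega)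
        linarith [this.2]
      calc (1 - (q ^ 4)⁻¹) * (1 - (q ^ 6)⁻¹)
          ≤ (1 - (q ^ 4)⁻¹) * 1 := by nlinarith [h4.1, h4.2, h6.1]
        _ ≤ (1 - (q ^ (e₁+1))⁻¹) * 1 := by nlinarith
        _ ≤ (1 - (q ^ (e₁+1))⁻¹) * gP q (e₁ + 1 + 1) n := by nlinarith
    · calc (1 - (q ^ 4)⁻¹) * (1 - (q ^ 6)⁻¹) ≤ 1 := hBle1
        _ ≤ gP q (e₁ + 1) (n + 1) := one_le_gP hq (n+1) (e₁+1) (by omega) ho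
  refine ⟨hA, hB, ?_⟩
  have hApos : 0 ≤ ∏ i ∈ Finset.Icc 1 (n+1), (1 - ((-q) ^ i)⁻¹) := by
    rw [hAeq]; exact le_of_lt (gP_pos hq (by norm_num) _)
  exact div_le_div₀ (by positivity) hA hBpos hB
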